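/- Let ρ_1, ρ_2 ∈ (0,1) with ρ_1 + ρ_2 = 1 and let ψ_4(σ) := σ⁴ − 1 − 4(σ − 1). Set μ̃ := 2 − 2√(1 − 3 ρ_2 (1 − ρ_2)) > 0. Then for all u_1, u_2 ∈ [0,1] with u_1 + u_2 = 1: Σ_{j=1}^2 ψ_4''(u_j/ρ_j) (1/ρ_j) (ρ_j − u_j)² ≥ μ̃ · Σ_{j=1}^2 ψ_4'(u_j/ρ_j) (u_j − ρ_j). Moreover μ̃ ≤ 1, with μ̃ = 1 exactly when ρ_2 = 1/2. -/

import Mathlib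

open Real Set

/-- the quartic entropy generator `ψ₄(σ) = σ⁴ - 1 - 4(σ-1)`, with
`ψ₄'(σ) = 4(σ³-1)` and `ψ₄''(σ) = 12σ²`, satisfies the `n = 2` admissibility
condition with constant `μ̃ = 2 - 2√(1 - 3ρ₂(1-ρ₂)) > 0`;  moreover `μ̃ ≤ 1`,
with equality exactly when `ρ₂ = 1/2`. -/
theorem stmt_9
    (ρ₁ ρ₂ : ℝ) (hρ₁ : ρ₁ ∈ Set.Ioo (0:ℝ) 1) (hρ₂ : ρ₂ ∈ Set.Ioo (0:ℝ) 1)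
    (hρsum : ρ₁ + ρ₂ = 1)
    (μt : ℝ) (hμt : μt = 2 - 2 * Real.sqrt (1 - 3 * ρ₂ * (1 - ρ₂))) :
    0 < μt ∧
    (∀ u₁ u₂ : ℝ, u₁ ∈ Set.Icc (0:ℝ) 1 → u₂ ∈ Set.Icc (0:ℝ) 1 → u₁ + u₂ = 1 →
      μt * ((4 * ((u₁ / ρ₁) ^ 3 - 1)) * (u₁ - ρ₁) + (4 * ((u₂ / ρ₂) ^ 3 - 1)) * (u₂ - ρ₂)) ≤
        (12 * (u₁ / ρ₁) ^ 2) * (1 / ρ₁) * (ρ₁ - u₁) ^ 2 +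
          (12 * (u₂ / ρ₂) ^ 2) * (1 / ρ₂) * (ρ₂ - u₂) ^ 2) ∧
    μt ≤ 1 ∧ (μt = 1 ↔ ρ₂ = 1/2) := by
  obtain ⟨hq0, hq1⟩ := hρ₂
  obtain ⟨hp0, hp1⟩ := hρ₁
  have hρ1eq : ρ₁ = 1 - ρ₂ := by linarith
  subst hρ1eq
  set s : ℝ := Real.sqrt (1 - 3 * ρ₂ * (1 - ρ₂)) with hsdef
  subst hμt
  have harg : (1:ℝ)/4 ≤ 1 - 3 * ρ₂ * (1 - ρ₂) := by nlinarith [sq_nonneg (ρ₂ - 1/2)]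
  have hs2 : s ^ 2 = 1 - 3 * ρ₂ * (1 - ρ₂) := Real.sq_sqrt (by linarith)
  have hs0 : 0 ≤ s := Real.sqrt_nonneg _
  have hs_half : 1/2 ≤ s := by nlinarith [hs2, harg]
  have hs_lt : s < 1 := by nlinarith [hs2, mul_pos hq0 (by linarith : (0:ℝ) < 1 - ρ₂)]
  refine ⟨by linarith, ?_, by linarith, ?_⟩
  · intro u₁ u₂ hu₁ hu₂ husum
    have hu2 : u₂ = 1 - u₁ := by linarith
    subst hu2
    have hpne : (1 - ρ₂) ≠ 0 := by linarith
    have hqne : ρ₂ ≠ 0 := by linarith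
    set A' : ℝ := 4*(u₁^3 - (1-ρ₂)^3)*(u₁-(1-ρ₂))*ρ₂^3
        + 4*((1-u₁)^3 - ρ₂^3)*((1-u₁)-ρ₂)*(1-ρ₂)^3 with hA'
    set B' : ℝ := 12*u₁^2*((1-ρ₂)-u₁)^2*ρ₂^3 + 12*(1-u₁)^2*(ρ₂-(1-u₁))^2*(1-ρ₂)^3 with hB'
    set W : ℝ := (1+2*s)*s*(u₁-(1-ρ₂)) + 3*(2*ρ₂-1)*(1-ρ₂)*ρ₂ with hW
    have key : (1+2*s) * (B' - (2-2*s) * A') = 4*(u₁-(1-ρ₂))^2 * W^2 := by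
      rw [hA', hB', hW]
      linear_combination ((-4) + (-16)*s^1 + (-16)*s^2 + (16)*u₁^1 + (64)*u₁^1*s^1 + (64)*u₁^1*s^2 + (-24)*u₁^2 + (-96)*u₁^2*s^1 + (-96)*u₁^2*s^2 + (16)*u₁^3 + (64)*u₁^3*s^1 + (64)*u₁^3*s^2 + (-4)*u₁^4 + (-16)*u₁^4*s^1 + (-16)*u₁^4*s^2 + (16)*ρ₂^1 + (64)*ρ₂^1*s^1 + (64)*ρ₂^1*s^2 + (-48)*ρ₂^1*u₁^1 + (-192)*ρ₂^1*u₁^1*s^1 + (-192)*ρ₂^1*u₁^1*s^2 + (48)*ρ₂^1*u₁^2 + (192)*ρ₂^1*u₁^2*s^1 + (192)*ρ₂^1*u₁^2*s^2 + (-16)*ρ₂^1*u₁^3 + (-64)*ρ₂^1*u₁^3*s^1 + (-64)*ρ₂^1*u₁^3*s^2 + (24)*ρ₂^2 + (-96)*ρ₂^2*s^1 + (-96)*ρ₂^2*s^2 + (-48)*ρ₂^2*u₁^1 + (192)*ρ₂^2*u₁^1*s^1 + (192)*ρ₂^2*u₁^1*s^2 + (24)*ρ₂^2*u₁^2 + (-96)*ρ₂^2*u₁^2*s^1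 + (-96)*ρ₂^2*u₁^2*s^2 + (-176)*ρ₂^3 + (64)*ρ₂^3*s^1 + (64)*ρ₂^3*s^2 + (272)*ρ₂^3*u₁^1 + (-64)*ρ₂^3*u₁^1*s^1 + (-64)*ρ₂^3*u₁^1*s^2 + (-96)*ρ₂^3*u₁^2 + (284)*ρ₂^4 + (-16)*ρ₂^4*s^1 + (-16)*ρ₂^4*s^2 + (-288)*ρ₂^4*u₁^1 + (48)*ρ₂^4*u₁^2 + (-192)*ρ₂^5 + (96)*ρ₂^5*u₁^1 + (48)*ρ₂^6) * hs2
    have h12s : (0:ℝ) < 1 + 2*s := by linarith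
    have hkey2 : B' - (2-2*s)*A' = 4*(u₁-(1-ρ₂))^2 * W^2 / (1+2*s) := by
      rw [eq_div_iff h12s.ne']
      linear_combination key
    have hnum : (0:ℝ) ≤ B' - (2-2*s)*A' := by rw [hkey2]; positivity
    have hdiff : ((12 * (u₁ / (1-ρ₂)) ^ 2) * (1 / (1-ρ₂)) * ((1-ρ₂) - u₁) ^ 2 +
          (12 * ((1-u₁) / ρ₂) ^ 2) * (1 / ρ₂) * (ρ₂ - (1-u₁)) ^ 2)
        - (2 - 2*s) * ((4 * ((u₁ / (1-ρ₂)) ^ 3 - 1)) * (u₁ - (1-ρ₂))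
            + (4 * (((1-u₁) / ρ₂) ^ 3 - 1)) * ((1-u₁) - ρ₂))
        = (B' - (2-2*s)*A') / ((1-ρ₂)^3 * ρ₂^3) := by
      rw [hA', hB']
      field_simp
    have hden : (0:ℝ) ≤ (B' - (2-2*s)*A') / ((1-ρ₂)^3 * ρ₂^3) :=
      div_nonneg hnum (by positivity)
    linarith [hdiff, hden]
  · constructor
    · intro h
      have hs12 : s = 1/2 := by linarith
      have : (1:ℝ)/4 = 1 - 3 * ρ₂ * (1 - ρ₂) := by rw [← hs2, hs12]; norm_num
      nlinarith [sq_nonneg (ρ₂ - 1/2)]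
    · intro h
      subst h
      have hs12 : s = 1/2 := by
        rw [hsdef, show (1:ℝ) - 3 * (1/2) * (1 - 1/2) = (1/2)^2 by norm_num,
          Real.sqrt_sq (by norm_num : (0:ℝ) ≤ 1/2)]
      rw [hs12]; norm_num
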